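/- Let q be prime, p a positive integer with p ≤ Cq for a fixed constant C < 1, and A > 0. Then Σ_{l=1}^∞ d(l) d(ql - p) (ql - p)^{-1} e^{-√(ql-p)/(2q²)} = O_{ε,C}( q^ε (q-p)^{-1+ε} + q^{-1+ε} ) for every ε > 0. -/

import Mathlib

open Real

open Finset

lemma divisor_bound (δ : ℝ) (hδ : 0 < δ) :
    ∃ D : ℝ, 1 ≤ D ∧ ∀ n : ℕ, 1 ≤ n → ((n.divisors.card : ℝ)) ≤ D * (n : ℝ) ^ δ := by
  have hlog2 : 0 < Real.log 2 := Real.log_pos one_lt_two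
  set L : ℝ := δ * Real.log 2 with hLdef
  have hL : 0 < L := mul_pos hδ hlog2
  set B : ℝ := 1 + 1 / L with hBdef
  have hB1 : 1 ≤ B := by
    have : 0 < 1 / L := by positivity
    simp only [hBdef]
    linarith
  set M : ℝ := (2 : ℝ) ^ (1 / δ) with hMdef
  refine ⟨B ^ (⌈M⌉₊), one_le_pow₀ hB1, ?_⟩
  intro n hn
  have hn0 : n ≠ 0 := by omega
  -- pointwise bound
  have key : ∀ p ∈ n.primeFactors, ((n.factorization p + 1 : ℕ) : ℝ) ≤
      (if (p : ℝ) < M then B else 1) * ((p : ℝ) ^ (n.factorization p)) ^ δ := by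
    intro p hp
    have hpp : p.Prime := Nat.prime_of_mem_primeFactors hp
    have hp2 : (2 : ℝ) ≤ (p : ℝ) := by exact_mod_cast hpp.two_le
    have hppos : (0 : ℝ) < p := by linarith
    set a : ℕ := n.factorization p
    split_ifs with h
    · -- small prime case
      have h2a : ((2 : ℝ) ^ a) ^ δ ≤ ((p : ℝ) ^ a) ^ δ :=
        Real.rpow_le_rpow (by positivity) (pow_le_pow_left₀ (by norm_num) hp2 a) hδ.le
      have e1 : ((2 : ℝ) ^ a) ^ δ = Real.exp (L * a) := by
        rw [← Real.rpow_natCast (2:ℝ) a, ← Real.rpow_mul (by norm_num), Real.rpow_def_of_pos (by norm_num)]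
        ring_nf
        rw [hLdef]; ring_nf
      have h1 : L * a + 1 ≤ Real.exp (L * a) := Real.add_one_le_exp _
      have ha0 : (0:ℝ) ≤ (a:ℝ) := Nat.cast_nonneg a
      have hE1 : (1:ℝ) ≤ Real.exp (L * a) := by nlinarith
      have : ((a : ℝ) + 1) ≤ B * ((2:ℝ) ^ a) ^ δ := by
        rw [e1, hBdef]
        have : (a:ℝ) ≤ Real.exp (L * a) / L := by
          rw [le_div_iff₀ hL]
          nlinarith
        have h2 : (1 + 1/L) * Real.exp (L*a) = Real.exp (L*a) + Real.exp (L*a)/L := by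
          field_simp
        rw [h2]
        have h3 : Real.exp (L*a)/L ≥ (a:ℝ) := this
        linarith
      calc ((a + 1 : ℕ) : ℝ) = (a : ℝ) + 1 := by push_cast; ring
        _ ≤ B * ((2:ℝ) ^ a) ^ δ := this
        _ ≤ B * ((p:ℝ) ^ a) ^ δ := by
            have hB0 : 0 ≤ B := by linarith
            exact mul_le_mul_of_nonneg_left h2a hB0
    · -- large prime case
      push_neg at h
      rw [one_mul]
      have hMδ : M ^ δ = 2 := by
        rw [hMdef, ← Real.rpow_mul (by norm_num), one_div_mul_cancel hδ.ne', Real.rpow_one]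
      have h2pδ : (2 : ℝ) ≤ (p : ℝ) ^ δ := by
        rw [← hMδ]
        exact Real.rpow_le_rpow (by positivity) h hδ.le
      have e2 : ((p : ℝ) ^ a) ^ δ = ((p : ℝ) ^ δ) ^ a := by
        rw [← Real.rpow_natCast (p:ℝ) a, ← Real.rpow_mul hppos.le, mul_comm,
          Real.rpow_mul hppos.le, Real.rpow_natCast]
      rw [e2]
      have h2a : ((a + 1 : ℕ) : ℝ) ≤ (2:ℝ) ^ a := by
        have : a < 2 ^ a := Nat.lt_two_pow_self
        have : (a + 1 : ℕ) ≤ 2 ^ a := this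
        exact_mod_cast this
      calc ((a + 1 : ℕ) : ℝ) ≤ (2:ℝ) ^ a := h2a
        _ ≤ ((p:ℝ) ^ δ) ^ a := pow_le_pow_left₀ (by norm_num) h2pδ a
  -- assemble
  have hcard : ((n.divisors.card : ℕ) : ℝ) = ∏ p ∈ n.primeFactors, ((n.factorization p + 1 : ℕ) : ℝ) := by
    rw [Nat.card_divisors hn0]
    push_cast
    rfl
  have hneq : (n : ℝ) = ∏ p ∈ n.primeFactors, (p : ℝ) ^ (n.factorization p) := by
    conv_lhs => rw [← Nat.factorization_prod_pow_eq_self hn0]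
    rw [Finsupp.prod, Nat.support_factorization]
    push_cast
    rfl
  have hprod1 : ∏ p ∈ n.primeFactors, (if (p : ℝ) < M then B else 1) ≤ B ^ (⌈M⌉₊) := by
    rw [← Finset.prod_filter]
    rw [Finset.prod_const]
    apply pow_le_pow_right₀ (by linarith)
    calc (n.primeFactors.filter (fun p : ℕ => (p : ℝ) < M)).card
        ≤ (Finset.range ⌈M⌉₊).card := by
          apply Finset.card_le_card
          intro x hx
          simp only [Finset.mem_filter] at hx
          exact Finset.mem_range.mpr (Nat.lt_ceil.mpr hx.2)
      _ = ⌈M⌉₊ := Finset.card_range _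
  calc ((n.divisors.card : ℕ) : ℝ)
      = ∏ p ∈ n.primeFactors, ((n.factorization p + 1 : ℕ) : ℝ) := hcard
    _ ≤ ∏ p ∈ n.primeFactors, ((if (p : ℝ) < M then B else 1) * ((p : ℝ) ^ (n.factorization p)) ^ δ) := by
        apply Finset.prod_le_prod
        · intro p _; positivity
        · exact key
    _ = (∏ p ∈ n.primeFactors, (if (p : ℝ) < M then B else 1)) *
        ∏ p ∈ n.primeFactors, ((p : ℝ) ^ (n.factorization p)) ^ δ := Finset.prod_mul_distrib
    _ ≤ B ^ (⌈M⌉₊) * (n : ℝ) ^ δ := by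
        apply mul_le_mul hprod1 ?_ ?_ (by positivity)
        · rw [hneq, ← Real.finset_prod_rpow _ _ (fun p _ => by positivity)]
        · positivity

lemma sum_inv_sq_le (N : ℕ) : ∑ l ∈ Finset.range N, ((((l+1 : ℕ)) : ℝ) ^ 2)⁻¹ ≤ 2 := by
  have h : ∀ N : ℕ, ∑ l ∈ Finset.range N, ((((l+1 : ℕ)) : ℝ) ^ 2)⁻¹ ≤ 2 - 2/(N+1) := by
    intro N
    induction N with
    | zero => norm_num
    | succ n ih =>
      rw [Finset.sum_range_succ]
      have h1 : ((((n+1 : ℕ)) : ℝ) ^ 2)⁻¹ ≤ 2/(n+1) - 2/(n+2) := by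
        have hn1 : (0:ℝ) < (n:ℝ) + 1 := by positivity
        have hn2 : (0:ℝ) < (n:ℝ) + 2 := by positivity
        rw [div_sub_div _ _ hn1.ne' hn2.ne']
        push_cast
        rw [inv_le_iff_one_le_mul₀ (by positivity), div_mul_eq_mul_div, le_div_iff₀ (by positivity)]
        nlinarith
      push_cast at *
      have : ((n:ℝ)+1)+1 = (n:ℝ)+2 := by ring
      rw [this]
      linarith
  calc ∑ l ∈ Finset.range N, ((((l+1 : ℕ)) : ℝ) ^ 2)⁻¹ ≤ 2 - 2/(N+1) := h N
    _ ≤ 2 := by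
        have : (0:ℝ) < (N:ℝ)+1 := by positivity
        have : 0 < 2/((N:ℝ)+1) := by positivity
        linarith

lemma sum_harmonic_le (L : ℕ) :
    ∑ l ∈ Finset.range L, (((l+1 : ℕ) : ℝ))⁻¹ ≤ 1 + Real.log L := by
  have := harmonic_le_one_add_log L
  have he : ((harmonic L : ℚ) : ℝ) = ∑ l ∈ Finset.range L, (((l+1 : ℕ) : ℝ))⁻¹ := by
    rw [harmonic]
    push_cast
    rfl
  rw [← he]
  exact this

lemma exp_neg_le_pow (y : ℝ) (hy : 0 < y) : Real.exp (-y) ≤ 8^8 / y^8 := by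
  have h1 : y/8 ≤ Real.exp (y/8) := by
    have := Real.add_one_le_exp (y/8)
    linarith
  have h2 : (y/8)^8 ≤ Real.exp y := by
    calc (y/8)^8 ≤ (Real.exp (y/8))^8 := pow_le_pow_left₀ (by positivity) h1 8
      _ = Real.exp ((8:ℕ) * (y/8)) := by rw [← Real.exp_nat_mul]
      _ = Real.exp y := by congr 1; push_cast; ring
  rw [Real.exp_neg, inv_le_comm₀ (Real.exp_pos y) (by positivity)]
  calc (8^8 / y^8)⁻¹ = (y/8)^8 := by field_simp
    _ ≤ Real.exp y := h2

set_option maxHeartbeats 1000000 in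
/-- Key estimate in Lemma 6: for prime `q` and `1 ≤ p ≤ Cq` with fixed `C < 1`,
`∑_{l≥1} d(l) d(ql-p) (ql-p)^{-1} e^{-√(ql-p)/(2q²)}
  = O_{ε,C}(q^ε (q-p)^{-1+ε} + q^{-1+ε})`. -/
theorem exp_divisor_sum_bound (C : ℝ) (hC0 : 0 < C) (hC1 : C < 1)
    (ε : ℝ) (hε : 0 < ε) :
    ∃ K : ℝ, 0 < K ∧ ∀ q : ℕ, q.Prime → ∀ p : ℕ, 1 ≤ p → (p : ℝ) ≤ C * q →
      (∑' l : ℕ,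
          (((l + 1).divisors.card : ℝ)) * (((q * (l + 1) - p : ℕ).divisors.card : ℝ)) *
            ((q * (l + 1) - p : ℕ) : ℝ)⁻¹ *
            Real.exp (-Real.sqrt (((q * (l + 1) - p : ℕ) : ℝ)) / (2 * (q : ℝ) ^ 2))) ≤
        K * ((q : ℝ) ^ ε * (((q - p : ℕ) : ℝ)) ^ (-1 + ε) + (q : ℝ) ^ (-1 + ε)) := by
  obtain ⟨δ, hδ0, hδ8, hδε⟩ : ∃ δ : ℝ, 0 < δ ∧ δ ≤ 1/8 ∧ 14*δ ≤ ε := by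
    refine ⟨min (ε/14) (1/8), lt_min (by positivity) (by norm_num), min_le_right _ _, ?_⟩
    have := min_le_left (ε/14) (1/8)
    linarith
  obtain ⟨D, hD1, hD⟩ := divisor_bound δ hδ0
  have hD0 : (0:ℝ) < D := by linarith
  have h1C : (0:ℝ) < 1 - C := by linarith
  have hs0 : 0 < Real.sqrt (1-C) := Real.sqrt_pos.mpr h1C
  set s : ℝ := Real.sqrt (1-C) with hsdef
  set c : ℝ := s / 2 with hcdef
  have hc0 : 0 < c := by positivity
  set C' : ℝ := 8^8 / c^8 with hC'def
  have hC'0 : 0 < C' := by positivity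
  set A : ℝ := D^2 * (1-C) ^ (δ-1) with hAdef
  have hA0 : 0 < A := mul_pos (by positivity) (Real.rpow_pos_of_pos h1C _)
  have h6δ : 0 < 1 + 6/δ := by positivity
  refine ⟨A * ((1 + 6/δ) + 2*C'), by positivity, ?_⟩
  set K : ℝ := A * ((1 + 6/δ) + 2*C') with hKdef
  have hK0 : 0 < K := by positivity
  intro q hq p hp1 hpC
  have hq2 : 2 ≤ q := hq.two_le
  set Q : ℝ := (q : ℝ) with hQdef
  have hQ1 : (1:ℝ) ≤ Q := by rw [hQdef]; exact_mod_cast (by omega : 1 ≤ q)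
  have hQ0 : (0:ℝ) < Q := by linarith
  have hpq : p < q := by
    by_contra h
    push_neg at h
    have h2 : Q ≤ (p:ℝ) := by rw [hQdef]; exact_mod_cast h
    nlinarith
  -- the comparison functions
  set φ : ℕ → ℝ := fun l => ((l:ℝ)+1)^(2*δ-1) *
    Real.exp (-(s * (Real.sqrt Q * Real.sqrt ((l:ℝ)+1))) / (2*Q^2)) with hφdef
  set ψ : ℕ → ℝ := fun l =>
    (if l < q^6 then Q^(12*δ) * ((l:ℝ)+1)⁻¹ else 0) + C' * (((l:ℝ)+1)^2)⁻¹ with hψdef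
  -- per-term bound
  have hterm : ∀ l : ℕ,
      (((l + 1).divisors.card : ℝ)) * (((q * (l + 1) - p : ℕ).divisors.card : ℝ)) *
        ((q * (l + 1) - p : ℕ) : ℝ)⁻¹ *
        Real.exp (-Real.sqrt (((q * (l + 1) - p : ℕ) : ℝ)) / (2 * Q ^ 2)) ≤
      A * Q^(δ-1) * φ l := by
    intro l
    have hu0 : (0:ℝ) < (l:ℝ)+1 := by positivity
    have hu1 : (1:ℝ) ≤ (l:ℝ)+1 := by
      have : (0:ℝ) ≤ (l:ℝ) := Nat.cast_nonneg l
      linarith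
    set m : ℕ := q * (l+1) - p with hmdef
    have hql : q ≤ q * (l+1) := Nat.le_mul_of_pos_right q (by omega)
    have hpql : p ≤ q * (l+1) := le_trans hpq.le hql
    have hm1 : 1 ≤ m := by omega
    have hmc : ((m : ℕ) : ℝ) = Q * ((l:ℝ)+1) - (p:ℝ) := by
      rw [hmdef, Nat.cast_sub hpql]
      push_cast
      ring
    have hmlb : (1-C) * (Q * ((l:ℝ)+1)) ≤ (m:ℝ) := by
      rw [hmc]
      have h1 : (p:ℝ) ≤ C * Q * ((l:ℝ)+1) := by nlinarith
      nlinarith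
    have hm0 : (0:ℝ) < (m:ℝ) := lt_of_lt_of_le (by positivity) hmlb
    have hdA := hD (l+1) (by omega)
    have hdB := hD m hm1
    push_cast at hdA
    have hE : Real.exp (-Real.sqrt (m:ℝ) / (2*Q^2)) ≤
        Real.exp (-(s * (Real.sqrt Q * Real.sqrt ((l:ℝ)+1))) / (2*Q^2)) := by
      apply Real.exp_le_exp.mpr
      have heq : s * (Real.sqrt Q * Real.sqrt ((l:ℝ)+1)) =
          Real.sqrt ((1-C) * (Q * ((l:ℝ)+1))) := by
        rw [Real.sqrt_mul h1C.le, Real.sqrt_mul hQ0.le, hsdef]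
      have h2 : s * (Real.sqrt Q * Real.sqrt ((l:ℝ)+1)) ≤ Real.sqrt (m:ℝ) := by
        rw [heq]
        exact Real.sqrt_le_sqrt hmlb
      exact (div_le_div_iff_of_pos_right (by positivity)).mpr (neg_le_neg h2)
    calc (((l + 1).divisors.card : ℝ)) * ((m.divisors.card : ℝ)) * ((m:ℕ):ℝ)⁻¹ *
          Real.exp (-Real.sqrt (((m:ℕ)):ℝ) / (2 * Q ^ 2))
        ≤ (D * ((l:ℝ)+1)^δ) * (D * (m:ℝ)^δ) * ((m:ℕ):ℝ)⁻¹ *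
          Real.exp (-(s * (Real.sqrt Q * Real.sqrt ((l:ℝ)+1))) / (2*Q^2)) := by
          have s1 : (((l + 1).divisors.card : ℝ)) * ((m.divisors.card : ℝ)) ≤
              (D * ((l:ℝ)+1)^δ) * (D * (m:ℝ)^δ) :=
            mul_le_mul hdA hdB (Nat.cast_nonneg _) (by positivity)
          have s2 : (((l + 1).divisors.card : ℝ)) * ((m.divisors.card : ℝ)) * ((m:ℕ):ℝ)⁻¹ ≤
              (D * ((l:ℝ)+1)^δ) * (D * (m:ℝ)^δ) * ((m:ℕ):ℝ)⁻¹ :=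
            mul_le_mul_of_nonneg_right s1 (by positivity)
          exact mul_le_mul s2 hE (Real.exp_pos _).le (by positivity)
      _ = (D*D) * (((l:ℝ)+1)^δ) * ((m:ℝ)^δ * ((m:ℝ))⁻¹) *
          Real.exp (-(s * (Real.sqrt Q * Real.sqrt ((l:ℝ)+1))) / (2*Q^2)) := by ring
      _ = (D*D) * (((l:ℝ)+1)^δ) * ((m:ℝ)^(δ-1)) *
          Real.exp (-(s * (Real.sqrt Q * Real.sqrt ((l:ℝ)+1))) / (2*Q^2)) := by
          rw [show δ - 1 = δ + (-1) by ring, Real.rpow_add hm0, Real.rpow_neg_one]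
      _ ≤ (D*D) * (((l:ℝ)+1)^δ) * ((1-C)^(δ-1) * (Q^(δ-1) * ((l:ℝ)+1)^(δ-1))) *
          Real.exp (-(s * (Real.sqrt Q * Real.sqrt ((l:ℝ)+1))) / (2*Q^2)) := by
          have hstep : (m:ℝ)^(δ-1) ≤ (1-C)^(δ-1) * (Q^(δ-1) * ((l:ℝ)+1)^(δ-1)) := by
            have h1 := Real.rpow_le_rpow_of_nonpos (by positivity) hmlb (by linarith : δ-1 ≤ 0)
            rwa [Real.mul_rpow h1C.le (by positivity), Real.mul_rpow hQ0.le hu0.le] at h1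
          have s3 : (D*D) * (((l:ℝ)+1)^δ) * ((m:ℝ)^(δ-1)) ≤
              (D*D) * (((l:ℝ)+1)^δ) * ((1-C)^(δ-1) * (Q^(δ-1) * ((l:ℝ)+1)^(δ-1))) :=
            mul_le_mul_of_nonneg_left hstep (by positivity)
          exact mul_le_mul_of_nonneg_right s3 (Real.exp_pos _).le
      _ = A * Q^(δ-1) * φ l := by
          have huu : ((l:ℝ)+1)^δ * ((l:ℝ)+1)^(δ-1) = ((l:ℝ)+1)^(2*δ-1) := by
            rw [← Real.rpow_add hu0]
            ring_nf
          rw [hAdef, hφdef]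
          simp only []
          rw [← huu]
          ring
  -- φ ≤ ψ
  have hφψ : ∀ l : ℕ, φ l ≤ ψ l := by
    intro l
    have hu0 : (0:ℝ) < (l:ℝ)+1 := by positivity
    have hu1 : (1:ℝ) ≤ (l:ℝ)+1 := by
      have : (0:ℝ) ≤ (l:ℝ) := Nat.cast_nonneg l
      linarith
    rw [hφdef, hψdef]
    simp only []
    by_cases hl : l < q^6
    · rw [if_pos hl]
      have hub : ((l:ℝ)+1) ≤ Q^(6:ℕ) := by
        have : (l+1 : ℕ) ≤ q^6 := hl
        rw [hQdef]
        exact_mod_cast this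
      have hexp1 : Real.exp (-(s * (Real.sqrt Q * Real.sqrt ((l:ℝ)+1))) / (2*Q^2)) ≤ 1 := by
        rw [Real.exp_le_one_iff]
        apply div_nonpos_of_nonpos_of_nonneg
        · simp only [neg_nonpos]
          positivity
        · positivity
      have h1 : ((l:ℝ)+1)^(2*δ-1) * Real.exp (-(s * (Real.sqrt Q * Real.sqrt ((l:ℝ)+1))) / (2*Q^2))
          ≤ ((l:ℝ)+1)^(2*δ-1) := by
        calc ((l:ℝ)+1)^(2*δ-1) * Real.exp (-(s * (Real.sqrt Q * Real.sqrt ((l:ℝ)+1))) / (2*Q^2))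
            ≤ ((l:ℝ)+1)^(2*δ-1) * 1 :=
              mul_le_mul_of_nonneg_left hexp1 (Real.rpow_nonneg hu0.le _)
          _ = ((l:ℝ)+1)^(2*δ-1) := mul_one _
      have h2 : ((l:ℝ)+1)^(2*δ-1) ≤ Q^(12*δ) * ((l:ℝ)+1)⁻¹ := by
        rw [show 2*δ - 1 = 2*δ + (-1) by ring, Real.rpow_add hu0, Real.rpow_neg_one]
        have hcalc : ((l:ℝ)+1)^(2*δ) ≤ Q^(12*δ) := by
          calc ((l:ℝ)+1)^(2*δ) ≤ (Q^(6:ℕ))^(2*δ) :=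
                Real.rpow_le_rpow hu0.le hub (by positivity)
            _ = Q^(12*δ) := by
                rw [← Real.rpow_natCast Q 6, ← Real.rpow_mul hQ0.le]
                congr 1
                push_cast
                ring
        exact mul_le_mul_of_nonneg_right hcalc (inv_nonneg.mpr hu0.le)
      have h3 : (0:ℝ) ≤ C' * (((l:ℝ)+1)^2)⁻¹ := by positivity
      linarith
    · rw [if_neg hl, zero_add]
      have hql6 : Q^(6:ℕ) ≤ (l:ℝ)+1 := by
        have h1 : q^6 ≤ l := Nat.le_of_not_lt hl
        have : (q^6 : ℕ) ≤ (l+1 : ℕ) := by omega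
        rw [hQdef]
        exact_mod_cast this
      have hu14 : (0:ℝ) < ((l:ℝ)+1)^((1:ℝ)/4) := Real.rpow_pos_of_pos hu0 _
      have hkey : c * ((l:ℝ)+1)^((1:ℝ)/4) ≤ s * (Real.sqrt Q * Real.sqrt ((l:ℝ)+1)) / (2*Q^2) := by
        have hqu : Q^((3:ℝ)/2) ≤ ((l:ℝ)+1)^((1:ℝ)/4) := by
          have h14 := Real.rpow_le_rpow (by positivity) hql6 (by norm_num : (0:ℝ) ≤ 1/4)
          have h6 : ((6:ℕ):ℝ) * (1/4) = 3/2 := by norm_num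
          rwa [← Real.rpow_natCast Q 6, ← Real.rpow_mul hQ0.le, h6] at h14
        have hsq : Q^2 * ((l:ℝ)+1)^((1:ℝ)/4) ≤ Real.sqrt Q * Real.sqrt ((l:ℝ)+1) := by
          have h1 : Real.sqrt ((l:ℝ)+1) = ((l:ℝ)+1)^((1:ℝ)/4) * ((l:ℝ)+1)^((1:ℝ)/4) := by
            rw [← Real.rpow_add hu0, Real.sqrt_eq_rpow]
            norm_num
          have h2 : Real.sqrt Q = Q^((1:ℝ)/2) := Real.sqrt_eq_rpow Q
          calc Q^2 * ((l:ℝ)+1)^((1:ℝ)/4)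
              = Q^((1:ℝ)/2) * (Q^((3:ℝ)/2) * ((l:ℝ)+1)^((1:ℝ)/4)) := by
                rw [← mul_assoc, ← Real.rpow_add hQ0,
                  show (1:ℝ)/2 + 3/2 = ((2:ℕ):ℝ) by norm_num, Real.rpow_natCast]
            _ ≤ Q^((1:ℝ)/2) * (((l:ℝ)+1)^((1:ℝ)/4) * ((l:ℝ)+1)^((1:ℝ)/4)) := by
                have := mul_le_mul_of_nonneg_right hqu hu14.le
                exact mul_le_mul_of_nonneg_left this (Real.rpow_nonneg hQ0.le _)
            _ = Real.sqrt Q * Real.sqrt ((l:ℝ)+1) := by rw [← h1, ← h2]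
        calc c * ((l:ℝ)+1)^((1:ℝ)/4) = s * (Q^2 * ((l:ℝ)+1)^((1:ℝ)/4)) / (2*Q^2) := by
              rw [hcdef]
              field_simp
          _ ≤ s * (Real.sqrt Q * Real.sqrt ((l:ℝ)+1)) / (2*Q^2) := by
              gcongr
      calc ((l:ℝ)+1)^(2*δ-1) * Real.exp (-(s * (Real.sqrt Q * Real.sqrt ((l:ℝ)+1))) / (2*Q^2))
          ≤ 1 * Real.exp (-(c * ((l:ℝ)+1)^((1:ℝ)/4))) := by
            apply mul_le_mul
            · exact Real.rpow_le_one_of_one_le_of_nonpos hu1 (by linarith)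
            · apply Real.exp_le_exp.mpr
              rw [neg_div]
              exact neg_le_neg hkey
            · positivity
            · norm_num
        _ = Real.exp (-(c * ((l:ℝ)+1)^((1:ℝ)/4))) := one_mul _
        _ ≤ 8^8 / (c * ((l:ℝ)+1)^((1:ℝ)/4))^8 := exp_neg_le_pow _ (by positivity)
        _ = C' * (((l:ℝ)+1)^2)⁻¹ := by
            rw [hC'def, mul_pow]
            have h8 : (((l:ℝ)+1)^((1:ℝ)/4))^(8:ℕ) = ((l:ℝ)+1)^2 := by
              rw [← Real.rpow_natCast (((l:ℝ)+1)^((1:ℝ)/4)) 8, ← Real.rpow_mul hu0.le,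
                show (1:ℝ)/4 * (8:ℕ) = ((2:ℕ):ℝ) by norm_num, Real.rpow_natCast]
            rw [h8]
            field_simp
  -- sum of ψ
  have hQδ1 : (1:ℝ) ≤ Q^δ := by
    have := Real.rpow_le_rpow_of_exponent_le hQ1 hδ0.le
    rwa [Real.rpow_zero] at this
  have hQ13δ1 : (1:ℝ) ≤ Q^(13*δ) := by
    have := Real.rpow_le_rpow_of_exponent_le hQ1 (by linarith : (0:ℝ) ≤ 13*δ)
    rwa [Real.rpow_zero] at this
  have hsumψ : ∀ N : ℕ, ∑ l ∈ Finset.range N, ψ l ≤ ((1 + 6/δ) + 2*C') * Q^(13*δ) := by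
    intro N
    rw [hψdef]
    simp only []
    rw [Finset.sum_add_distrib]
    have hifsum : ∑ l ∈ Finset.range N, (if l < q^6 then Q^(12*δ) * ((l:ℝ)+1)⁻¹ else 0)
        ≤ (1 + 6/δ) * Q^(13*δ) := by
      rw [← Finset.sum_filter]
      have hsub : (Finset.range N).filter (fun l => l < q^6) ⊆ Finset.range (q^6) := by
        intro x hx
        simp only [Finset.mem_filter, Finset.mem_range] at hx ⊢
        exact hx.2
      calc ∑ l ∈ (Finset.range N).filter (fun l => l < q^6), Q^(12*δ) * ((l:ℝ)+1)⁻¹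
          ≤ ∑ l ∈ Finset.range (q^6), Q^(12*δ) * ((l:ℝ)+1)⁻¹ := by
            apply Finset.sum_le_sum_of_subset_of_nonneg hsub
            intro i _ _
            positivity
        _ = Q^(12*δ) * ∑ l ∈ Finset.range (q^6), ((l:ℝ)+1)⁻¹ := by rw [Finset.mul_sum]
        _ ≤ Q^(12*δ) * (1 + Real.log (q^6 : ℕ)) := by
            have hsh := sum_harmonic_le (q^6)
            have heq : ∑ l ∈ Finset.range (q^6), (((l+1 : ℕ) : ℝ))⁻¹
                = ∑ l ∈ Finset.range (q^6), ((l:ℝ)+1)⁻¹ := by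
              apply Finset.sum_congr rfl
              intro i _
              push_cast
              ring_nf
            rw [heq] at hsh
            apply mul_le_mul_of_nonneg_left hsh
            positivity
        _ ≤ Q^(12*δ) * ((1 + 6/δ) * Q^δ) := by
            have hlog : Real.log ((q^6 : ℕ) : ℝ) = 6 * Real.log Q := by
              push_cast
              rw [Real.log_pow]
              norm_num
              rfl
            have hlogQ : Real.log Q ≤ Q^δ / δ := by
              rw [le_div_iff₀ hδ0]
              have h1 : Real.log (Q^δ) ≤ Q^δ - 1 := Real.log_le_sub_one_of_pos (Real.rpow_pos_of_pos hQ0 _)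
              rw [Real.log_rpow hQ0] at h1
              nlinarith
            have : 1 + Real.log ((q^6:ℕ):ℝ) ≤ (1 + 6/δ) * Q^δ := by
              rw [hlog]
              have h2 : 6 * Real.log Q ≤ 6 * (Q^δ/δ) := by linarith
              have h3 : (1 + 6/δ) * Q^δ = Q^δ + 6*(Q^δ/δ) := by
                field_simp
              linarith
            apply mul_le_mul_of_nonneg_left this
            positivity
        _ = (1 + 6/δ) * Q^(13*δ) := by
            rw [mul_comm (Q^(12*δ)) ((1+6/δ)*Q^δ), mul_assoc, ← Real.rpow_add hQ0,
              show δ + 12*δ = 13*δ by ring]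
    have h2sum : ∑ l ∈ Finset.range N, C' * (((l:ℝ)+1)^2)⁻¹ ≤ 2 * C' := by
      rw [← Finset.mul_sum]
      have hs2 := sum_inv_sq_le N
      have heq : ∑ l ∈ Finset.range N, ((((l+1:ℕ)):ℝ)^2)⁻¹
          = ∑ l ∈ Finset.range N, (((l:ℝ)+1)^2)⁻¹ := by
        apply Finset.sum_congr rfl
        intro i _
        push_cast
        ring_nf
      rw [heq] at hs2
      calc C' * ∑ l ∈ Finset.range N, (((l:ℝ)+1)^2)⁻¹ ≤ C' * 2 :=
            mul_le_mul_of_nonneg_left hs2 hC'0.le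
        _ = 2 * C' := by ring
    have h2C' : 2 * C' ≤ 2 * C' * Q^(13*δ) := by nlinarith
    calc ∑ l ∈ Finset.range N, (if l < q^6 then Q^(12*δ) * ((l:ℝ)+1)⁻¹ else 0)
          + ∑ l ∈ Finset.range N, C' * (((l:ℝ)+1)^2)⁻¹
        ≤ (1 + 6/δ) * Q^(13*δ) + 2 * C' * Q^(13*δ) := by linarith
      _ = ((1 + 6/δ) + 2*C') * Q^(13*δ) := by ring
  -- assemble
  apply Real.tsum_le_of_sum_range_le
  · intro l
    positivity
  · intro N
    calc ∑ l ∈ Finset.range N,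
          (((l + 1).divisors.card : ℝ)) * (((q * (l + 1) - p : ℕ).divisors.card : ℝ)) *
            ((q * (l + 1) - p : ℕ) : ℝ)⁻¹ *
            Real.exp (-Real.sqrt (((q * (l + 1) - p : ℕ) : ℝ)) / (2 * Q ^ 2))
        ≤ ∑ l ∈ Finset.range N, A * Q^(δ-1) * φ l := Finset.sum_le_sum (fun l _ => hterm l)
      _ = A * Q^(δ-1) * ∑ l ∈ Finset.range N, φ l := by rw [Finset.mul_sum]
      _ ≤ A * Q^(δ-1) * ∑ l ∈ Finset.range N, ψ l := by
          apply mul_le_mul_of_nonneg_left (Finset.sum_le_sum (fun l _ => hφψ l))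
          positivity
      _ ≤ A * Q^(δ-1) * (((1 + 6/δ) + 2*C') * Q^(13*δ)) := by
          apply mul_le_mul_of_nonneg_left (hsumψ N)
          positivity
      _ = K * (Q^(δ-1) * Q^(13*δ)) := by rw [hKdef]; ring
      _ = K * Q^(14*δ - 1) := by
          rw [← Real.rpow_add hQ0]
          ring_nf
      _ ≤ K * Q^(-1 + ε) := by
          apply mul_le_mul_of_nonneg_left _ hK0.le
          apply Real.rpow_le_rpow_of_exponent_le hQ1
          linarith
      _ ≤ K * (Q ^ ε * (((q - p : ℕ) : ℝ)) ^ (-1 + ε) + Q ^ (-1 + ε)) := by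
          apply mul_le_mul_of_nonneg_left _ hK0.le
          have h0 : (0:ℝ) ≤ Q ^ ε * (((q - p : ℕ) : ℝ)) ^ (-1 + ε) :=
            mul_nonneg (Real.rpow_nonneg hQ0.le _) (Real.rpow_nonneg (Nat.cast_nonneg _) _)
          linarith
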